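/- For a diagonal matrix D = diag(t, t, 1, …, 1) with t ≠ 0 and a symmetric matrix x with all entries nonzero such that J(x) is invertible: (J(D x D))⁻¹ = D (J(x))⁻¹ D. Consequently, K(D x D) = D K(x) D where K(x) = (J(x))⁻¹. -/
import Mathlib


/-- For D = diag(t,t,1,…,1) with t ≠ 0 and x symmetric with all entries nonzero and
J(x) invertible: (J(D x D))⁻¹ = D (J(x))⁻¹ D, i.e. K(D x D) = D K(x) D. -/
theorem stmt_10 (q : ℕ) (hq : 2 ≤ q) (t : ℂ) (ht : t ≠ 0)
    (x : Matrix (Fin q) (Fin q) ℂ) (hsymm : x.IsSymm) (hx : ∀ i j, x i j ≠ 0)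
    (J : Matrix (Fin q) (Fin q) ℂ → Matrix (Fin q) (Fin q) ℂ)
    (hJ : ∀ y, J y = Matrix.of fun i j => (y i j)⁻¹)
    (hJx : IsUnit (J x).det)
    (D : Matrix (Fin q) (Fin q) ℂ)
    (hD : D = Matrix.diagonal fun i : Fin q => if (i : ℕ) < 2 then t else 1)
    (K : Matrix (Fin q) (Fin q) ℂ → Matrix (Fin q) (Fin q) ℂ)
    (hK : ∀ y, K y = (J y)⁻¹) :
    (J (D * x * D))⁻¹ = D * (J x)⁻¹ * D ∧ K (D * x * D) = D * K x * D := by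
  set d : Fin q → ℂ := fun i => if (i : ℕ) < 2 then t else 1 with hd
  have hdne : ∀ i, d i ≠ 0 := by
    intro i; simp only [hd]; split <;> simp [ht]
  have hmain : J (D * x * D) =
      Matrix.diagonal (fun i => (d i)⁻¹) * J x * Matrix.diagonal (fun i => (d i)⁻¹) := by
    rw [hJ, hJ, hD]
    ext i j
    simp [Matrix.mul_apply, Matrix.diagonal, Finset.sum_ite_eq, Finset.sum_ite_eq',
      mul_inv, mul_comm, mul_assoc]
  have hdiaginv : (Matrix.diagonal (fun i => (d i)⁻¹))⁻¹ = Matrix.diagonal d := by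
    apply Matrix.inv_eq_right_inv
    rw [Matrix.diagonal_mul_diagonal]
    convert Matrix.diagonal_one with i
    exact inv_mul_cancel₀ (hdne i)
  have : (J (D * x * D))⁻¹ =
      Matrix.diagonal d * (J x)⁻¹ * Matrix.diagonal d := by
    rw [hmain, Matrix.mul_inv_rev, Matrix.mul_inv_rev, hdiaginv, mul_assoc]
  have hDd : D = Matrix.diagonal d := hD
  constructor
  · rw [this, hDd]
  · rw [hK, hK, this, hDd]
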